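/- Let X be a Hausdorff topological space. Suppose that for every proper lower semicontinuous function f : X → ℝ ∪ {+∞} bounded from below and every x₀ ∈ dom f there exists a continuous bounded function h : X → ℝ₊ with h(x₀) = 0 and ‖h‖_∞ = f(x₀) − inf_X f such that f + h attains its minimum on X at x₀. Then X is a completely regular topological space. -/
import Mathlib


open Filter Topology BoundedContinuousFunction

/-- **Theorem 2.2.**  If in a Hausdorff space `X` the Kenderov–Revalski variational
principle holds for every proper lower semicontinuous function bounded from below,
then `X` is completely regular. -/
theorem completelyRegular_of_variational_principle
    {X : Type*} [TopologicalSpace X] [T2Space X]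
    (H : ∀ f : X → EReal, (∀ x, f x ≠ ⊥) → LowerSemicontinuous f →
      (∃ m : ℝ, ∀ x, (m : EReal) ≤ f x) → (∃ x, f x ≠ ⊤) →
      ∀ x₀ : X, f x₀ ≠ ⊤ →
        ∃ h : X →ᵇ ℝ, (∀ x, 0 ≤ h x) ∧ h x₀ = 0 ∧
          ((‖h‖ : ℝ) : EReal) = f x₀ - ⨅ x, f x ∧
          ∀ x, f x₀ + (h x₀ : EReal) ≤ f x + (h x : EReal)) :
    CompletelyRegularSpace X := by
  classical
  constructor
  intro x₀ K hK hx₀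
  rcases K.eq_empty_or_nonempty with rfl | ⟨k, hk⟩
  · exact ⟨0, continuous_const, rfl, fun x hx => absurd hx (Set.notMem_empty x)⟩
  · set f : X → EReal := fun x => if x ∈ K then 0 else if x = x₀ then 1 else ⊤ with hf
    have one_ne : ¬(1 : EReal) = ⊤ := by
      rw [← EReal.coe_one]; exact EReal.coe_ne_top 1
    have hge : ∀ x, (0 : EReal) ≤ f x := by
      intro x
      simp only [hf]
      split_ifs
      · exact le_refl 0
      · exact zero_le_one
      · exact le_top
    have hfx₀ : f x₀ = 1 := by simp [hf, hx₀]
    have hnb : ∀ x, f x ≠ ⊥ := fun x => ne_bot_of_le_ne_bot (by simp) (hge x)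
    have hlsc : LowerSemicontinuous f := by
      intro x y hy
      by_cases h1 : x ∈ K
      · have : y < 0 := by rwa [show f x = 0 by simp [hf, h1]] at hy
        exact Filter.Eventually.of_forall fun x' => lt_of_lt_of_le this (hge x')
      · by_cases h2 : x = x₀
        · have hy1 : y < 1 := by rwa [show f x = 1 by simp [hf, h2, hx₀]] at hy
          refine Filter.eventually_of_mem (hK.isOpen_compl.mem_nhds h1) ?_
          intro x' hx'
          have hx'' : x' ∉ K := hx'
          have : (1 : EReal) ≤ f x' := by
            by_cases h3 : x' = x₀
            · simp [hf, hx'', h3, hx₀]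
            · simp [hf, hx'', h3]
          exact lt_of_lt_of_le hy1 this
        · have hU : IsOpen (Kᶜ ∩ {x₀}ᶜ) :=
            hK.isOpen_compl.inter isClosed_singleton.isOpen_compl
          refine Filter.eventually_of_mem (hU.mem_nhds ⟨h1, h2⟩) ?_
          rintro x' ⟨hx'1, hx'2⟩
          have h3 : x' ∉ K := hx'1
          have h4 : x' ≠ x₀ := hx'2
          have hfx : f x = ⊤ := by simp [hf, h1, h2]
          rw [hfx] at hy
          rw [show f x' = ⊤ by simp [hf, h3, h4]]
          exact hy
    have hbd : ∃ m : ℝ, ∀ x, (m : EReal) ≤ f x := ⟨0, fun x => by exact_mod_cast hge x⟩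
    obtain ⟨h, hpos, hzero, hnorm, hmin⟩ :=
      H f hnb hlsc hbd ⟨x₀, by rw [hfx₀]; exact one_ne⟩ x₀ (by rw [hfx₀]; exact one_ne)
    have hinf : (⨅ x, f x) = 0 := by
      refine le_antisymm ?_ (le_iInf hge)
      exact iInf_le_of_le k (by simp [hf, hk])
    have hnorm1 : ‖h‖ = 1 := by
      have : ((‖h‖ : ℝ) : EReal) = ((1 : ℝ) : EReal) := by
        rw [hnorm, hfx₀, hinf]; simp
      exact_mod_cast this
    have hle1 : ∀ x, h x ≤ 1 := fun x => by
      calc h x ≤ |h x| := le_abs_self _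
        _ ≤ ‖h‖ := h.norm_coe_le_norm x
        _ = 1 := hnorm1
    have heq1 : ∀ x ∈ K, h x = 1 := by
      intro x hx
      refine le_antisymm (hle1 x) ?_
      have := hmin x
      rw [show f x = 0 by simp [hf, hx], hfx₀, hzero, zero_add] at this
      have h2 : ((1:ℝ) : EReal) ≤ ((h x : ℝ) : EReal) := by
        simpa using this
      exact_mod_cast h2
    refine ⟨fun x => ⟨h x, hpos x, hle1 x⟩, ?_, ?_, ?_⟩
    · exact Continuous.subtype_mk h.continuous _
    · exact Subtype.ext hzero
    · intro x hx
      exact Subtype.ext (heq1 x hx)
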